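/- Explicit formula for the twiddle operation (Lemma 6, first identity): For any linear operator X on V, the contour-integral twiddle X̃ := (2πi)^{−1} ∮_Γ (H − z)^{−1} X (H − z)^{−1} dz equals −Σ_{j=1}^m ( P_j X R̂_{λ_j} + R̂_{λ_j} X P_j ), where P_j is the spectral projection of H for the eigenvalue λ_j and R̂_{λ_j} := Σ_{μ ∈ σ(H), μ ∉ {λ₁,…,λ_m}} (μ − λ_j)^{−1} Π_μ is the reduced resolvent (Π_μ the spectral projection for eigenvalue μ). -/

import Mathlib

open Complex Metric Set

lemma circle_inv_out {c w : ℂ} {r : ℝ} (hr : 0 < r) (hw : r < ‖w - c‖) :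
    (∮ z in C(c, r), (z - w)⁻¹) = 0 := by
  have hne : ∀ z ∈ closedBall c r, z - w ≠ 0 := by
    intro z hz
    rw [sub_ne_zero]
    rintro rfl
    exact absurd (mem_closedBall_iff_norm.1 hz) (not_le.2 hw)
  refine Complex.circleIntegral_eq_zero_of_differentiable_on_off_countable hr.le
    Set.countable_empty ((continuousOn_id.sub continuousOn_const).inv₀ hne) ?_
  rintro z ⟨hz, -⟩
  exact (differentiableAt_id.sub_const w).inv (hne z (ball_subset_closedBall hz))

lemma circle_inv_pair (c : ℂ) {r : ℝ} (hr : 0 < r) (a b : ℂ)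
    (ha : ‖a - c‖ ≠ r) (hb : ‖b - c‖ ≠ r) :
    (∮ z in C(c, r), (a - z)⁻¹ * (b - z)⁻¹)
      = (a - b)⁻¹ * ((if ‖a - c‖ < r then (2 * Real.pi * Complex.I : ℂ) else 0)
          - (if ‖b - c‖ < r then (2 * Real.pi * Complex.I : ℂ) else 0)) := by
  have hflip : ∀ z : ℂ, (a - z)⁻¹ * (b - z)⁻¹ = (z - a)⁻¹ * (z - b)⁻¹ := by
    intro z
    rw [← neg_sub z a, ← neg_sub z b, inv_neg, inv_neg]
    ring
  have hI : ∀ w : ℂ, ‖w - c‖ ≠ r →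
      (∮ z in C(c, r), (z - w)⁻¹)
        = (if ‖w - c‖ < r then (2 * Real.pi * Complex.I : ℂ) else 0) := by
    intro w hwne
    rcases lt_or_gt_of_ne hwne with h | h
    · rw [if_pos h]
      exact circleIntegral.integral_sub_inv_of_mem_ball (mem_ball_iff_norm.2 h)
    · rw [if_neg (not_lt.2 h.le)]
      exact circle_inv_out hr h
  rcases eq_or_ne a b with rfl | hab
  · have h2 : (∮ z in C(c, r), (a - z)⁻¹ * (a - z)⁻¹)
        = ∮ z in C(c, r), (z - a) ^ (-2 : ℤ) := by
      refine circleIntegral.integral_congr hr.le fun z _ => ?_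
      rw [hflip, zpow_neg, ← mul_inv, ← sq]
      norm_cast
    rw [h2, circleIntegral.integral_sub_zpow_of_ne (by decide) c a r, sub_self,
      inv_zero, zero_mul]
  · have key : Set.EqOn (fun z => (a - z)⁻¹ * (b - z)⁻¹)
        (fun z => (a - b)⁻¹ * ((z - a)⁻¹ - (z - b)⁻¹)) (sphere c r) := by
      intro z hz
      have hzs : ‖z - c‖ = r := mem_sphere_iff_norm.1 hz
      have hza : z - a ≠ 0 := sub_ne_zero.2 fun h => ha (h ▸ hzs)
      have hzb : z - b ≠ 0 := sub_ne_zero.2 fun h => hb (h ▸ hzs)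
      simp only [hflip]
      rw [inv_sub_inv hza hzb, show z - b - (z - a) = a - b by ring, div_eq_mul_inv,
        ← mul_assoc, inv_mul_cancel₀ (sub_ne_zero.2 hab), one_mul, mul_inv]
    rw [circleIntegral.integral_congr hr.le key, circleIntegral.integral_const_mul,
      circleIntegral.integral_sub
        ((circleIntegrable_sub_inv_iff).2 (Or.inr (by
          rw [abs_of_pos hr]; exact fun h => ha (mem_sphere_iff_norm.1 h))))
        ((circleIntegrable_sub_inv_iff).2 (Or.inr (by
          rw [abs_of_pos hr]; exact fun h => hb (mem_sphere_iff_norm.1 h)))),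
      hI a ha, hI b hb]

lemma circleIntegral_finset_sum {E : Type*} [NormedAddCommGroup E] [NormedSpace ℂ E]
    {α : Type*} (s : Finset α) (f : α → ℂ → E) {c : ℂ} {r : ℝ}
    (h : ∀ i ∈ s, CircleIntegrable (f i) c r) :
    (∮ z in C(c, r), ∑ i ∈ s, f i z) = ∑ i ∈ s, ∮ z in C(c, r), f i z := by
  simp only [circleIntegral, Finset.smul_sum]
  exact intervalIntegral.integral_finset_sum fun i hi => (h i hi).out

/-- **Explicit formula for the twiddle operation (Lemma 6, first identity).**

`H` is a self-adjoint operator on a finite-dimensional complex inner product space with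
spectral decomposition `H = Σᵢ μs i • Pi i` (`Pi i` orthogonal spectral projections,
pairwise orthogonal, summing to `1`, for distinct eigenvalues `μs i`).  The band
consists of the eigenvalues `μs (ι j)`, `j = 1, …, m` (`ι` injective), and `Γ` is a
positively oriented circle of center `c` and radius `r` enclosing exactly these
eigenvalues and no other point of the spectrum.

Then for every operator `X`, the contour twiddle
`X̃ = (2πi)⁻¹ ∮_Γ (H−z)⁻¹ X (H−z)⁻¹ dz` equals
`−Σⱼ ( Pⱼ X R̂_{λⱼ} + R̂_{λⱼ} X Pⱼ )`, where `Pⱼ = Pi (ι j)` and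
`R̂_{λⱼ} = Σ_{i ∉ range ι} (μs i − μs (ι j))⁻¹ • Pi i` is the reduced resolvent. -/
theorem twiddle_explicit_formula
    {V : Type*} [NormedAddCommGroup V] [InnerProductSpace ℂ V] [FiniteDimensional ℂ V]
    (H : V →L[ℂ] V) (hH : IsSelfAdjoint H)
    (N : ℕ) (μs : Fin N → ℝ) (Pi : Fin N → V →L[ℂ] V)
    (hμinj : Function.Injective μs)
    (hPisa : ∀ i, IsSelfAdjoint (Pi i))
    (hPiidem : ∀ i, Pi i ∘L Pi i = Pi i)
    (hPine : ∀ i, Pi i ≠ 0)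
    (hPiorth : ∀ i i', i ≠ i' → Pi i ∘L Pi i' = 0)
    (hPisum : ∑ i, Pi i = 1)
    (hHspec : H = ∑ i, (μs i : ℂ) • Pi i)
    (m : ℕ) (ι : Fin m → Fin N) (hι : Function.Injective ι)
    (c : ℂ) (r : ℝ) (hr : 0 < r)
    (hin : ∀ j, ‖((μs (ι j) : ℂ)) - c‖ < r)
    (hout : ∀ i, (∀ j, ι j ≠ i) → r < ‖((μs i : ℂ)) - c‖)
    (X : V →L[ℂ] V) :
    let Rhat : Fin m → V →L[ℂ] V := fun j =>
      ∑ i ∈ Finset.univ.filter (fun i => ∀ j', ι j' ≠ i),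
        (((μs i : ℂ) - (μs (ι j) : ℂ))⁻¹) • Pi i
    (2 * (Real.pi : ℂ) * Complex.I)⁻¹ •
        circleIntegral (fun z =>
          Ring.inverse (H - z • (1 : V →L[ℂ] V)) ∘L X ∘L
            Ring.inverse (H - z • (1 : V →L[ℂ] V))) c r
      = -(∑ j, (Pi (ι j) ∘L X ∘L Rhat j + Rhat j ∘L X ∘L Pi (ι j))) := by
  intro Rhat
  have htwo : (2 * (Real.pi : ℂ) * Complex.I) ≠ 0 := by
    simp [Real.pi_ne_zero, Complex.I_ne_zero, Complex.ofReal_ne_zero]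
  -- no eigenvalue is on the circle
  have hne_sphere : ∀ i : Fin N, ‖((μs i : ℂ)) - c‖ ≠ r := by
    intro i
    by_cases h : ∀ j, ι j ≠ i
    · exact ne_of_gt (hout i h)
    · push_neg at h
      obtain ⟨j, rfl⟩ := h
      exact ne_of_lt (hin j)
  -- product of spectral sums
  have hmul : ∀ f g : Fin N → ℂ,
      (∑ i, f i • Pi i) * (∑ i, g i • Pi i) = ∑ i, (f i * g i) • Pi i := by
    intro f g
    rw [Finset.sum_mul_sum]
    refine Finset.sum_congr rfl fun i _ => ?_
    rw [Finset.sum_eq_single i]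
    · rw [smul_mul_assoc, mul_smul_comm, smul_smul, ContinuousLinearMap.mul_def, hPiidem]
    · intro k _ hk
      rw [smul_mul_assoc, mul_smul_comm, ContinuousLinearMap.mul_def,
        hPiorth i k (Ne.symm hk)]
      simp
    · intro h
      exact absurd (Finset.mem_univ i) h
  -- the resolvent on the sphere
  have hres : ∀ z ∈ sphere c r, Ring.inverse (H - z • (1 : V →L[ℂ] V))
      = ∑ i, ((μs i : ℂ) - z)⁻¹ • Pi i := by
    intro z hz
    have hzs : ‖z - c‖ = r := mem_sphere_iff_norm.1 hz
    have hzne : ∀ i, ((μs i : ℂ)) - z ≠ 0 := fun i =>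
      sub_ne_zero.2 fun h => hne_sphere i (by rw [h, hzs])
    have hA : H - z • (1 : V →L[ℂ] V) = ∑ i, (((μs i : ℂ)) - z) • Pi i := by
      rw [hHspec, ← hPisum, Finset.smul_sum, ← Finset.sum_sub_distrib]
      exact Finset.sum_congr rfl fun i _ => (sub_smul _ _ _).symm
    have hAB : (H - z • (1 : V →L[ℂ] V)) * (∑ i, ((μs i : ℂ) - z)⁻¹ • Pi i) = 1 := by
      rw [hA, hmul]
      rw [← hPisum]
      exact Finset.sum_congr rfl fun i _ => by rw [mul_inv_cancel₀ (hzne i), one_smul]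
    have hBA : (∑ i, ((μs i : ℂ) - z)⁻¹ • Pi i) * (H - z • (1 : V →L[ℂ] V)) = 1 := by
      rw [hA, hmul]
      rw [← hPisum]
      exact Finset.sum_congr rfl fun i _ => by rw [inv_mul_cancel₀ (hzne i), one_smul]
    exact Ring.inverse_unit ⟨_, _, hAB, hBA⟩
  set T : Fin N × Fin N → V →L[ℂ] V := fun p => Pi p.1 ∘L X ∘L Pi p.2 with hT
  -- integrand on the sphere as a finite sum
  have hfun : Set.EqOn
      (fun z => Ring.inverse (H - z • (1 : V →L[ℂ] V)) ∘L X ∘L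
        Ring.inverse (H - z • (1 : V →L[ℂ] V)))
      (fun z => ∑ p : Fin N × Fin N,
        ((((μs p.1 : ℂ)) - z)⁻¹ * (((μs p.2 : ℂ)) - z)⁻¹) • T p) (sphere c r) := by
    intro z hz
    simp only
    rw [hres z hz, Fintype.sum_prod_type]
    show (∑ i, ((μs i : ℂ) - z)⁻¹ • Pi i) * (X * (∑ i, ((μs i : ℂ) - z)⁻¹ • Pi i)) = _
    rw [Finset.mul_sum, Finset.sum_mul_sum]
    refine Finset.sum_congr rfl fun i _ => Finset.sum_congr rfl fun k _ => ?_
    simp only [smul_mul_assoc, mul_smul_comm, smul_smul]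
    rw [mul_comm]
    rfl
  have hint : ∀ p : Fin N × Fin N, p ∈ (Finset.univ : Finset (Fin N × Fin N)) →
      CircleIntegrable
      (fun z => ((((μs p.1 : ℂ)) - z)⁻¹ * (((μs p.2 : ℂ)) - z)⁻¹) • T p) c r := by
    intro p _
    refine ContinuousOn.circleIntegrable hr.le ?_
    have hc : ∀ i : Fin N, ContinuousOn (fun z : ℂ => (((μs i : ℂ)) - z)⁻¹) (sphere c r) := by
      intro i
      refine (continuousOn_const.sub continuousOn_id).inv₀ ?_
      intro z hz
      refine sub_ne_zero.2 fun h => hne_sphere i ?_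
      rw [show ((μs i : ℂ)) = z from h]
      exact mem_sphere_iff_norm.1 hz
    exact ((hc p.1).mul (hc p.2)).smul continuousOn_const
  rw [circleIntegral.integral_congr hr.le hfun, circleIntegral_finset_sum _ _ hint]
  -- compute the scalar integrals
  set Ind : Fin N → ℂ := fun i =>
    if ‖((μs i : ℂ)) - c‖ < r then (2 * Real.pi * Complex.I : ℂ) else 0 with hIndDef
  have hval : ∀ p : Fin N × Fin N,
      (∮ z in C(c, r), ((((μs p.1 : ℂ)) - z)⁻¹ * (((μs p.2 : ℂ)) - z)⁻¹))
        = ((μs p.1 : ℂ) - (μs p.2 : ℂ))⁻¹ * (Ind p.1 - Ind p.2) := fun p =>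
    circle_inv_pair c hr _ _ (hne_sphere p.1) (hne_sphere p.2)
  simp only [circleIntegral.integral_smul_const, hval]
  rw [Finset.smul_sum]
  simp only [smul_smul]
  -- the coefficient
  set D : Fin N → Fin N → ℂ := fun i k =>
    (2 * (Real.pi : ℂ) * Complex.I)⁻¹ * (((μs i : ℂ) - (μs k : ℂ))⁻¹ * (Ind i - Ind k))
    with hDdef
  have hLHS : (∑ p : Fin N × Fin N,
      ((2 * (Real.pi : ℂ) * Complex.I)⁻¹ *
        (((μs p.1 : ℂ) - (μs p.2 : ℂ))⁻¹ * (Ind p.1 - Ind p.2))) • T p)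
      = ∑ i, ∑ k, D i k • T (i, k) := by
    rw [Fintype.sum_prod_type]
  rw [hLHS]
  -- values of Ind
  have hInd0 : ∀ i, (∀ j', ι j' ≠ i) → Ind i = 0 := by
    intro i h
    rw [hIndDef]
    exact if_neg (not_lt.2 (hout i h).le)
  have hInd1 : ∀ j, Ind (ι j) = (2 * Real.pi * Complex.I : ℂ) := by
    intro j
    rw [hIndDef]
    exact if_pos (hin j)
  -- split the double sum
  have hsplit : ∀ F : Fin N → V →L[ℂ] V, (∑ i, F i)
      = (∑ i ∈ Finset.univ.filter (fun i => ∀ j', ι j' ≠ i), F i)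
        + ∑ i ∈ Finset.univ.filter (fun i => ¬ ∀ j', ι j' ≠ i), F i := fun F =>
    (Finset.sum_filter_add_sum_filter_not _ _ _).symm
  have himg : Finset.univ.filter (fun i => ¬ ∀ j', ι j' ≠ i)
      = Finset.univ.image ι := by
    ext i
    simp only [Finset.mem_filter, Finset.mem_univ, true_and, Finset.mem_image]
    push_neg
    simp
  have himage : ∀ F : Fin N → V →L[ℂ] V,
      (∑ i ∈ Finset.univ.filter (fun i => ¬ ∀ j', ι j' ≠ i), F i) = ∑ j, F (ι j) := by
    intro F
    rw [himg, Finset.sum_image (fun x _ y _ h => hι h)]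
  -- coefficient simplifications
  have hcoef1 : ∀ x : ℂ, (2 * (Real.pi : ℂ) * Complex.I)⁻¹ *
      (x * ((0 : ℂ) - 2 * Real.pi * Complex.I)) = -x := by
    intro x
    field_simp
    ring
  have hcoef2 : ∀ x : ℂ, (2 * (Real.pi : ℂ) * Complex.I)⁻¹ *
      (x * ((2 * Real.pi * Complex.I : ℂ) - 0)) = x := by
    intro x
    field_simp
    ring
  -- the two nonvanishing blocks
  have hB1 : (∑ i ∈ Finset.univ.filter (fun i => ∀ j', ι j' ≠ i), ∑ k, D i k • T (i, k))
      = ∑ j, ∑ i ∈ Finset.univ.filter (fun i => ∀ j', ι j' ≠ i),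
          (-((((μs i : ℂ)) - (μs (ι j) : ℂ))⁻¹)) • T (i, ι j) := by
    calc (∑ i ∈ Finset.univ.filter (fun i => ∀ j', ι j' ≠ i), ∑ k, D i k • T (i, k))
        = ∑ i ∈ Finset.univ.filter (fun i => ∀ j', ι j' ≠ i),
            ((∑ k ∈ Finset.univ.filter (fun k => ∀ j', ι j' ≠ k), D i k • T (i, k))
              + ∑ j, D i (ι j) • T (i, ι j)) := by
          refine Finset.sum_congr rfl fun i _ => ?_
          rw [hsplit (fun k => D i k • T (i, k)), himage]
      _ = ∑ i ∈ Finset.univ.filter (fun i => ∀ j', ι j' ≠ i),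
            ∑ j, D i (ι j) • T (i, ι j) := by
          refine Finset.sum_congr rfl fun i hi => ?_
          rw [Finset.sum_eq_zero, zero_add]
          intro k hk
          rw [hDdef]
          simp [hInd0 i (Finset.mem_filter.1 hi).2, hInd0 k (Finset.mem_filter.1 hk).2]
      _ = ∑ j, ∑ i ∈ Finset.univ.filter (fun i => ∀ j', ι j' ≠ i),
            D i (ι j) • T (i, ι j) := Finset.sum_comm
      _ = _ := by
          refine Finset.sum_congr rfl fun j _ => Finset.sum_congr rfl fun i hi => ?_
          rw [hDdef]
          simp only [hInd0 i (Finset.mem_filter.1 hi).2, hInd1 j]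
          rw [hcoef1]
  have hB2 : (∑ i ∈ Finset.univ.filter (fun i => ¬ ∀ j', ι j' ≠ i), ∑ k, D i k • T (i, k))
      = ∑ j, ∑ k ∈ Finset.univ.filter (fun k => ∀ j', ι j' ≠ k),
          ((((μs (ι j) : ℂ)) - (μs k : ℂ))⁻¹) • T (ι j, k) := by
    rw [himage (fun i => ∑ k, D i k • T (i, k))]
    refine Finset.sum_congr rfl fun j _ => ?_
    rw [hsplit (fun k => D (ι j) k • T (ι j, k)), himage (fun k => D (ι j) k • T (ι j, k))]
    have h0 : (∑ j' : Fin m, D (ι j) (ι j') • T (ι j, ι j')) = 0 := by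
      refine Finset.sum_eq_zero fun j' _ => ?_
      rw [hDdef]
      simp [hInd1 j, hInd1 j']
    rw [h0, add_zero]
    refine Finset.sum_congr rfl fun k hk => ?_
    rw [hDdef]
    simp only [hInd0 k (Finset.mem_filter.1 hk).2, hInd1 j]
    rw [hcoef2]
  rw [hsplit (fun i => ∑ k, D i k • T (i, k)), hB1, hB2]
  -- expand the right-hand side
  have hA : ∀ j, Pi (ι j) ∘L X ∘L Rhat j
      = ∑ k ∈ Finset.univ.filter (fun k => ∀ j', ι j' ≠ k),
          ((((μs k : ℂ)) - (μs (ι j) : ℂ))⁻¹) • T (ι j, k) := by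
    intro j
    show Pi (ι j) * (X * Rhat j) = _
    simp only [Rhat]
    rw [Finset.mul_sum, Finset.mul_sum]
    refine Finset.sum_congr rfl fun k _ => ?_
    rw [mul_smul_comm, mul_smul_comm]
    rfl
  have hB : ∀ j, Rhat j ∘L X ∘L Pi (ι j)
      = ∑ i ∈ Finset.univ.filter (fun i => ∀ j', ι j' ≠ i),
          ((((μs i : ℂ)) - (μs (ι j) : ℂ))⁻¹) • T (i, ι j) := by
    intro j
    show Rhat j * (X * Pi (ι j)) = _
    simp only [Rhat]
    rw [Finset.sum_mul]
    refine Finset.sum_congr rfl fun i _ => ?_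
    rw [smul_mul_assoc]
    rfl
  simp only [hA, hB]
  rw [Finset.sum_add_distrib, neg_add, add_comm]
  congr 1
  · rw [← Finset.sum_neg_distrib]
    refine Finset.sum_congr rfl fun j _ => ?_
    rw [← Finset.sum_neg_distrib]
    refine Finset.sum_congr rfl fun k _ => ?_
    rw [← neg_smul, ← inv_neg, neg_sub]
  · rw [← Finset.sum_neg_distrib]
    refine Finset.sum_congr rfl fun j _ => ?_
    rw [← Finset.sum_neg_distrib]
    refine Finset.sum_congr rfl fun i _ => ?_
    rw [neg_smul]
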